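/- If σ ∈ S_n(132), φ = σ^{σ_j} is defined, and S(T(σ)) = ⟨a_1,…,a_s⟩ is the spine structure of T(σ), then the spine structure of T(φ) is obtained from ⟨a_1,…,a_s⟩ by merging exactly two parts: there exist indices l ≠ m such that the parts of S(T(φ)) form the multiset {a_1,…,a_s} − {a_l, a_m} ∪ {a_l + a_m}. -/

import Mathlib

/-- A permutation `σ` of `{0,…,n-1}` is 132-avoiding if there are no indices
`a < b < c` with `σ a < σ c < σ b`. -/
def Avoids132 {n : ℕ} (σ : Equiv.Perm (Fin n)) : Prop :=
  ¬ ∃ a b c : Fin n, a < b ∧ b < c ∧ σ a < σ c ∧ σ c < σ b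

/-- `s` is an occurrence of the pattern `τ` in `σ`: a strictly increasing choice of
positions whose values are order-isomorphic to `τ`. -/
def IsOccurrence {k n : ℕ} (τ : Equiv.Perm (Fin k)) (σ : Equiv.Perm (Fin n))
    (s : Fin k → Fin n) : Prop :=
  StrictMono s ∧ ∀ a b : Fin k, σ (s a) < σ (s b) ↔ τ a < τ b

/-- The number of occurrences of the pattern `τ` in `σ`. -/
noncomputable def numOcc {k n : ℕ} (τ : Equiv.Perm (Fin k)) (σ : Equiv.Perm (Fin n)) : ℕ :=
  Nat.card {s : Fin k → Fin n // IsOccurrence τ σ s}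

open scoped Classical in
/-- `pop n τ` is `A_n(τ)`: the total number of occurrences of the pattern `τ`
over all 132-avoiding permutations of length `n`. -/
noncomputable def pop (n : ℕ) {k : ℕ} (τ : Equiv.Perm (Fin k)) : ℕ :=
  ∑ σ : Equiv.Perm (Fin n), if Avoids132 σ then numOcc τ σ else 0

/-- The move `σ^{σ_j}` is defined at positions `i < j`. -/
def MoveAt {n : ℕ} (σ : Equiv.Perm (Fin n)) (i j : Fin n) : Prop :=
  i < j ∧ σ i < σ j ∧ (∀ a : Fin n, a < i → σ j < σ a) ∧
    (∀ b : Fin n, i < b → b < j → σ b < σ i)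

/-- `φ = σ^{σ_j}`: the move is defined at `i < j` and `φ` is obtained from `σ` by removing
the entry at position `j` and reinserting it immediately before position `i`. -/
def IsShift {n : ℕ} (σ φ : Equiv.Perm (Fin n)) (i j : Fin n) : Prop :=
  MoveAt σ i j ∧
  (∀ t : Fin n, t < i → φ t = σ t) ∧ φ i = σ j ∧
  (∀ t : Fin n, i ≤ t → ∀ h : t < j,
    φ ⟨(t : ℕ) + 1, Nat.lt_of_le_of_lt (Nat.succ_le_of_lt (Fin.lt_def.mp h)) j.isLt⟩ = σ t) ∧
  (∀ t : Fin n, j < t → φ t = σ t)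

/-- The pattern 213 (zero-indexed one-line notation 1,0,2). -/
def p213 : Equiv.Perm (Fin 3) := Equiv.swap 0 1
/-- The pattern 231 (zero-indexed one-line notation 1,2,0). -/
def p231 : Equiv.Perm (Fin 3) := finRotate 3
/-- The pattern 312 (zero-indexed one-line notation 2,0,1). -/
def p312 : Equiv.Perm (Fin 3) := (finRotate 3)⁻¹
/-- The pattern 3241 (zero-indexed one-line notation 2,1,3,0). -/
def p3241 : Equiv.Perm (Fin 4) := ⟨![2,1,3,0], ![3,1,0,2], by decide, by decide⟩
/-- The pattern 3421 (zero-indexed one-line notation 2,3,1,0). -/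
def p3421 : Equiv.Perm (Fin 4) := ⟨![2,3,1,0], ![3,2,0,1], by decide, by decide⟩
/-- The pattern 324, order-isomorphic to 213. -/
def p324 : Equiv.Perm (Fin 3) := Equiv.swap 0 1
/-- The pattern 342, order-isomorphic to 231. -/
def p342 : Equiv.Perm (Fin 3) := finRotate 3
/-- The decreasing pattern of length 2. -/
def p21 : Equiv.Perm (Fin 2) := Equiv.swap 0 1
/-- The increasing pattern of length 2. -/
def p12 : Equiv.Perm (Fin 2) := 1
/-- The single-letter pattern. -/
def p1 : Equiv.Perm (Fin 1) := 1

/-- `Cm m = |S_m(132)|`, the number of 132-avoiding permutations of length `m`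
(the `m`-th Catalan number). -/
noncomputable def Cm (m : ℕ) : ℕ := Nat.card {σ : Equiv.Perm (Fin m) // Avoids132 σ}

/-- Fuelled construction of the binary tree of a sequence: root at the maximum entry,
left/right subtrees built recursively from the parts left/right of the maximum. -/
def toTreeAux : ℕ → List ℕ → Tree Unit
  | 0, _ => Tree.nil
  | _ + 1, [] => Tree.nil
  | fuel + 1, l =>
    let m := l.idxOf (l.foldr max 0)
    Tree.node () (toTreeAux fuel (l.take m)) (toTreeAux fuel (l.drop (m + 1)))

/-- The (unlabelled) binary tree associated to a sequence of distinct naturals. -/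
def toTree (l : List ℕ) : Tree Unit := toTreeAux l.length l

/-- The binary tree `T(σ)` associated to a permutation `σ`. -/
def treeOf {n : ℕ} (σ : Equiv.Perm (Fin n)) : Tree Unit :=
  toTree (List.ofFn fun i => (σ i : ℕ))

/-- Labelled version of `toTreeAux`, storing the value at each vertex. -/
def toTreeLAux : ℕ → List ℕ → Tree ℕ
  | 0, _ => Tree.nil
  | _ + 1, [] => Tree.nil
  | fuel + 1, l =>
    let m := l.idxOf (l.foldr max 0)
    Tree.node (l.foldr max 0) (toTreeLAux fuel (l.take m)) (toTreeLAux fuel (l.drop (m + 1)))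

/-- The labelled binary tree associated to a sequence of distinct naturals. -/
def toTreeL (l : List ℕ) : Tree ℕ := toTreeLAux l.length l

/-- The labelled binary tree `T(σ)` associated to a permutation `σ`, vertices
labelled by the values of `σ`. -/
def treeOfL {n : ℕ} (σ : Equiv.Perm (Fin n)) : Tree ℕ :=
  toTreeL (List.ofFn fun i => (σ i : ℕ))

/-- `spineAux t = (r, S)` where `r` is the number of vertices on the spine through the
root of `t` (following right children) and `S` is the multiset of sizes of all the
other spines (components after deleting all left-child edges). -/
def spineAux {α : Type*} : Tree α → ℕ × Multiset ℕ
  | BinaryTree.nil => (0, 0)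
  | BinaryTree.node _ L R =>
    let aL := spineAux L
    let aR := spineAux R
    (aR.1 + 1, (if aL.1 = 0 then aL.2 else aL.1 ::ₘ aL.2) + aR.2)

/-- The spine structure of a binary tree: the multiset of sizes of the connected
components obtained after deleting every edge joining a left child to its parent. -/
def spineStructure {α : Type*} (t : Tree α) : Multiset ℕ :=
  let a := spineAux t
  if a.1 = 0 then a.2 else a.1 ::ₘ a.2

/-- `RefinementLE b a` means `b ≤_R a` in refinement order: `a` can be obtained from `b`
by merging (nonempty) subsets of its parts. -/
def RefinementLE (b a : Multiset ℕ) : Prop :=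
  ∃ P : Multiset (Multiset ℕ), (∀ m ∈ P, m ≠ 0) ∧ P.sum = b ∧ P.map Multiset.sum = a

/-- The label of the root of a labelled tree, if any. -/
def rootLabel? : Tree ℕ → Option ℕ
  | BinaryTree.nil => none
  | BinaryTree.node v _ _ => some v

/-- `IsParent t p c`: in the labelled tree `t`, the vertex labelled `p` is the parent of
the vertex labelled `c`. -/
def IsParent : Tree ℕ → ℕ → ℕ → Prop
  | BinaryTree.nil, _, _ => False
  | BinaryTree.node v L R, p, c =>
      (p = v ∧ (rootLabel? L = some c ∨ rootLabel? R = some c)) ∨ IsParent L p c ∨ IsParent R p c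

lemma foldr_max_mem : ∀ (l : List ℕ), l ≠ [] → l.foldr max 0 ∈ l
  | [a], _ => by simp
  | a :: b :: l, _ => by
    rcases max_cases a ((b :: l).foldr max 0) with ⟨h, _⟩ | ⟨h, _⟩
    · simp only [List.foldr_cons] at h ⊢
      rw [h]; exact List.mem_cons_self
    · have := foldr_max_mem (b :: l) (by simp)
      simp only [List.foldr_cons] at h ⊢
      rw [h]
      exact List.mem_cons_of_mem _ this

lemma le_foldr_max (l : List ℕ) : ∀ y ∈ l, y ≤ l.foldr max 0 := by
  induction l with
  | nil => simp
  | cons a l ih =>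
    intro y hy
    rcases List.mem_cons.1 hy with rfl | hy
    · exact le_max_left _ _
    · exact le_trans (ih y hy) (le_max_right _ _)

lemma toTreeAux_congr : ∀ (f₁ f₂ : ℕ) (l : List ℕ), l.length ≤ f₁ → l.length ≤ f₂ →
    toTreeAux f₁ l = toTreeAux f₂ l := by
  intro f₁
  induction f₁ with
  | zero =>
    intro f₂ l h₁ _
    have : l = [] := List.length_eq_zero_iff.1 (Nat.le_zero.1 h₁)
    subst this
    cases f₂ <;> rfl
  | succ f ih =>
    intro f₂ l h₁ h₂
    match l, f₂ with
    | [], 0 => rfl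
    | [], f₂ + 1 => rfl
    | a :: l, 0 => simp at h₂
    | a :: l, f₂ + 1 =>
      have hm : (a :: l).idxOf ((a :: l).foldr max 0) < (a :: l).length :=
        List.idxOf_lt_length_iff.2 (foldr_max_mem _ (by simp))
      simp only [List.length_cons] at h₁ h₂ hm
      have hf : l.length ≤ f := Nat.lt_succ_iff.mp h₁
      have hf₂ : l.length ≤ f₂ := Nat.lt_succ_iff.mp h₂
      have hm' : (a :: l).idxOf ((a :: l).foldr max 0) ≤ l.length := Nat.lt_succ_iff.mp hm
      show Tree.node _ _ _ = Tree.node _ _ _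
      congr 1
      · exact ih f₂ _ (by simp only [List.length_take, List.length_cons]; omega) (by simp only [List.length_take, List.length_cons]; omega)
      · exact ih f₂ _ (by simp only [List.length_drop, List.length_cons]; omega) (by simp only [List.length_drop, List.length_cons]; omega)

lemma toTree_unfold (l : List ℕ) (h : l ≠ []) :
    toTree l = Tree.node () (toTree (l.take (l.idxOf (l.foldr max 0))))
      (toTree (l.drop (l.idxOf (l.foldr max 0) + 1))) := by
  obtain ⟨a, t, rfl⟩ := List.exists_cons_of_ne_nil h
  have hm : (a :: t).idxOf ((a :: t).foldr max 0) < (a :: t).length :=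
    List.idxOf_lt_length_iff.2 (foldr_max_mem _ (by simp))
  show toTreeAux (t.length + 1) (a :: t) = _
  show Tree.node () (toTreeAux t.length _) (toTreeAux t.length _) = _
  unfold toTree
  congr 1
  · apply toTreeAux_congr
    · simp only [List.length_take, List.length_cons] at *; omega
    · rfl
  · apply toTreeAux_congr
    · simp only [List.length_drop, List.length_cons] at *; omega
    · rfl

lemma split_foldr_max (P : List ℕ) (M : ℕ) (Q : List ℕ)
    (hP : ∀ y ∈ P, y < M) (hQ : ∀ y ∈ Q, y < M) :
    (P ++ M :: Q).foldr max 0 = M := by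
  apply le_antisymm
  · have := foldr_max_mem (P ++ M :: Q) (by simp)
    rcases List.mem_append.1 this with h | h
    · exact le_of_lt (hP _ h)
    · rcases List.mem_cons.1 h with h | h
      · exact le_of_eq h
      · exact le_of_lt (hQ _ h)
  · exact le_foldr_max _ M (by simp)

lemma toTree_split (P : List ℕ) (M : ℕ) (Q : List ℕ)
    (hP : ∀ y ∈ P, y < M) (hQ : ∀ y ∈ Q, y < M) :
    toTree (P ++ M :: Q) = Tree.node () (toTree P) (toTree Q) := by
  have hfold := split_foldr_max P M Q hP hQ
  have hidx : (P ++ M :: Q).idxOf M = P.length := by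
    rw [List.idxOf_append_of_notMem (fun hM => lt_irrefl M (hP _ hM))]
    simp [List.idxOf_cons_self]
  have htake : (P ++ M :: Q).take P.length = P := List.take_left
  have hdrop : (P ++ M :: Q).drop (P.length + 1) = Q := by
    have : P ++ M :: Q = (P ++ [M]) ++ Q := by simp
    rw [this]
    have : P.length + 1 = (P ++ [M]).length := by simp
    rw [this, List.drop_left]
  rw [toTree_unfold _ (by simp), hfold, hidx, htake, hdrop]

lemma rs_pos (l : List ℕ) (h : l ≠ []) : (spineAux (toTree l)).1 ≠ 0 := by
  rw [toTree_unfold l h]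
  simp [spineAux]

lemma lt_of_nodup_split (P : List ℕ) (M : ℕ) (Q : List ℕ)
    (hnd : (P ++ M :: Q).Nodup) (hle : ∀ y ∈ P ++ M :: Q, y ≤ M) :
    (∀ y ∈ P, y < M) ∧ (∀ y ∈ Q, y < M) := by
  obtain ⟨hndP, hndMQ, hdisj⟩ := List.nodup_append.1 hnd
  constructor
  · intro y hy
    have h1 := hle y (by simp [hy])
    rcases lt_or_eq_of_le h1 with h | rfl
    · exact h
    · exact absurd rfl (hdisj _ hy _ List.mem_cons_self)
  · intro y hy
    have h1 := hle y (by simp [hy])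
    rcases lt_or_eq_of_le h1 with h | rfl
    · exact h
    · exact absurd hy (List.nodup_cons.1 hndMQ).1

lemma max_split (B : List ℕ) (hB : B ≠ []) (hnd : B.Nodup) :
    ∃ M P Q, B = P ++ M :: Q ∧ (∀ y ∈ B, y ≤ M) ∧ (∀ y ∈ P, y < M) ∧ (∀ y ∈ Q, y < M) := by
  obtain ⟨P, Q, hPQ⟩ := List.append_of_mem (foldr_max_mem B hB)
  refine ⟨B.foldr max 0, P, Q, hPQ, le_foldr_max B, ?_⟩
  exact lt_of_nodup_split P _ Q (hPQ ▸ hnd) (fun y hy => le_foldr_max B y (hPQ ▸ hy))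

lemma spineAux_concat : ∀ (nB : ℕ) (B C : List ℕ), B.length ≤ nB → B.Nodup →
    (∀ b ∈ B, ∀ c ∈ C, c < b) →
    spineAux (toTree (B ++ C)) = ((spineAux (toTree B)).1 + (spineAux (toTree C)).1,
      (spineAux (toTree B)).2 + (spineAux (toTree C)).2) := by
  intro nB
  induction nB with
  | zero =>
    intro B C hlen _ _
    have : B = [] := List.length_eq_zero_iff.1 (Nat.le_zero.1 hlen)
    subst this
    show spineAux (toTree C) = _
    show _ = ((spineAux Tree.nil).1 + _, (spineAux Tree.nil).2 + _)
    simp [spineAux]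
  | succ nB ih =>
    intro B C hlen hnd hBC
    rcases eq_or_ne B [] with rfl | hB
    · show spineAux (toTree C) = _
      show _ = ((spineAux Tree.nil).1 + _, (spineAux Tree.nil).2 + _)
      simp [spineAux]
    obtain ⟨M, P, Q, hPQ, hle, hPlt, hQlt⟩ := max_split B hB hnd
    have hMB : M ∈ B := by rw [hPQ]; simp
    have hQC : ∀ y ∈ Q ++ C, y < M := by
      intro y hy
      rcases List.mem_append.1 hy with h | h
      · exact hQlt y h
      · exact lt_of_lt_of_le (hBC M hMB y h) (le_refl M)
    have hsplit1 : toTree (B ++ C) = Tree.node () (toTree P) (toTree (Q ++ C)) := by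
      rw [hPQ, List.append_assoc, List.cons_append]
      exact toTree_split P M (Q ++ C) hPlt hQC
    have hsplit2 : toTree B = Tree.node () (toTree P) (toTree Q) := by
      rw [hPQ]; exact toTree_split P M Q hPlt hQlt
    have hndQ : Q.Nodup := by
      apply List.Nodup.sublist _ (hPQ ▸ hnd)
      exact List.Sublist.trans (List.sublist_cons_self M Q) (List.sublist_append_right P _)
    have hlenQ : Q.length ≤ nB := by
      have := congrArg List.length hPQ
      simp only [List.length_append, List.length_cons] at this
      omega
    have hrec := ih Q C hlenQ hndQ (fun b hb => hBC b (by rw [hPQ]; simp [hb]))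
    rw [hsplit1, hsplit2]
    show ((spineAux (toTree (Q ++ C))).1 + 1, _ + (spineAux (toTree (Q ++ C))).2) = _
    rw [hrec]
    show (_ , _) = ((spineAux (toTree Q)).1 + 1 + _, (_ + (spineAux (toTree Q)).2) + _)
    refine Prod.ext ?_ ?_
    · simp; omega
    · simp [add_assoc]

open List in
def SAvoid (l : List ℕ) : Prop := ∀ x y z : ℕ, [x, y, z] <+ l → ¬(x < z ∧ z < y)

open List in
lemma SAvoid.sublist {l₁ l₂ : List ℕ} (h : l₁ <+ l₂) (h₂ : SAvoid l₂) : SAvoid l₁ :=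
  fun x y z hs => h₂ x y z (hs.trans h)

lemma spineAux_node {α : Type*} (u : α) (Lt Rt : Tree α) :
    spineAux (Tree.node u Lt Rt) = ((spineAux Rt).1 + 1,
      (if (spineAux Lt).1 = 0 then (spineAux Lt).2 else (spineAux Lt).1 ::ₘ (spineAux Lt).2)
        + (spineAux Rt).2) := rfl

open List in
lemma key : ∀ (n : ℕ) (A : List ℕ) (v x : ℕ) (B C : List ℕ),
    (A ++ v :: B ++ x :: C).length ≤ n →
    (A ++ v :: B ++ x :: C).Nodup →
    SAvoid (A ++ v :: B ++ x :: C) →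
    (∀ a ∈ A, x < a) → (∀ b ∈ B, b < v) → v < x →
    ((spineAux (toTree (A ++ x :: v :: B ++ C))).1
        = (spineAux (toTree (A ++ v :: B ++ x :: C))).1 ∧
      ∃ a b S, (spineAux (toTree (A ++ v :: B ++ x :: C))).2 = a ::ₘ b ::ₘ S ∧
        (spineAux (toTree (A ++ x :: v :: B ++ C))).2 = (a + b) ::ₘ S) ∨
    (∃ a S, (spineAux (toTree (A ++ v :: B ++ x :: C))).2 = a ::ₘ S ∧
      (spineAux (toTree (A ++ x :: v :: B ++ C))).1
        = (spineAux (toTree (A ++ v :: B ++ x :: C))).1 + a ∧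
      (spineAux (toTree (A ++ x :: v :: B ++ C))).2 = S) := by
  intro n
  induction n with
  | zero =>
    intro A v x B C hlen _ _ _ _ _
    exfalso
    simp at hlen
  | succ n IH =>
    intro A v x B C hlen hnd hav hA hB hvx
    obtain ⟨M, hMdef⟩ : ∃ M, (A ++ v :: B ++ x :: C).foldr max 0 = M := ⟨_, rfl⟩
    have hMmem := hMdef ▸ foldr_max_mem (A ++ v :: B ++ x :: C) (by simp)
    have hle : ∀ y ∈ A ++ v :: B ++ x :: C, y ≤ M := fun y hy => hMdef ▸ le_foldr_max _ y hy
    have hxle : x ≤ M := hle x (by simp)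
    simp only [List.mem_append, List.mem_cons] at hMmem
    rcases hMmem with ((hMA | rfl | hMB) | rfl | hMC)
    · -- M ∈ A
      obtain ⟨s, t, rfl⟩ := List.append_of_mem hMA
      have hshape : (s ++ M :: t) ++ v :: B ++ x :: C = s ++ M :: (t ++ v :: B ++ x :: C) := by
        simp
      have hshape' : (s ++ M :: t) ++ x :: v :: B ++ C = s ++ M :: (t ++ x :: v :: B ++ C) := by
        simp
      obtain ⟨hslt, hrlt⟩ := lt_of_nodup_split s M (t ++ v :: B ++ x :: C)
        (hshape ▸ hnd) (fun y hy => hle y (hshape ▸ hy))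
      have hrlt' : ∀ y ∈ t ++ x :: v :: B ++ C, y < M := by
        intro y hy
        apply hrlt
        simp only [List.mem_append, List.mem_cons] at hy ⊢
        tauto
      have hT : toTree ((s ++ M :: t) ++ v :: B ++ x :: C)
          = Tree.node () (toTree s) (toTree (t ++ v :: B ++ x :: C)) := by
        rw [hshape]
        exact toTree_split _ _ _ hslt (fun y hy => hrlt y (by simpa using hy))
      have hT' : toTree ((s ++ M :: t) ++ x :: v :: B ++ C)
          = Tree.node () (toTree s) (toTree (t ++ x :: v :: B ++ C)) := by
        rw [hshape']
        exact toTree_split _ _ _ hslt (fun y hy => hrlt' y (by simpa using hy))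
      have hsub : t ++ v :: B ++ x :: C <+ (s ++ M :: t) ++ v :: B ++ x :: C := by
        rw [hshape]
        have h1 : t ++ v :: B ++ x :: C <+ M :: (t ++ v :: B ++ x :: C) := by
          simpa using List.sublist_cons_self M (t ++ v :: B ++ x :: C)
        exact h1.trans (List.sublist_append_right s _)
      have hrec := IH t v x B C
        (by have := hlen; simp only [List.length_append, List.length_cons] at this ⊢; omega)
        (hsub.nodup hnd) (SAvoid.sublist hsub hav)
        (fun a ha => hA a (by simp [ha])) hB hvx
      rw [hT, hT', spineAux_node, spineAux_node]
      set PL := spineAux (toTree s) with hPL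
      set X := (if PL.1 = 0 then PL.2 else PL.1 ::ₘ PL.2) with hX
      rcases hrec with ⟨h1, a, b, S, h2, h3⟩ | ⟨a, S, h1, h2, h3⟩
      · left
        refine ⟨by rw [h1], a, b, X + S, ?_, ?_⟩
        · simp only [h2]
          rw [Multiset.add_cons, Multiset.add_cons]
        · simp only [h3, h1]
          rw [Multiset.add_cons]
      · right
        refine ⟨a, X + S, ?_, ?_, ?_⟩
        · simp only [h1]
          rw [Multiset.add_cons]
        · simp only [h2]
          omega
        · simp only [h3]
    · -- M = v : contradiction
      exact absurd hxle (not_le.2 hvx)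
    · -- M ∈ B: contradiction
      exact absurd hxle (not_le.2 (lt_trans (hB M hMB) hvx))
    · -- M = M : the base case
      have hA0 : A = [] := by
        refine List.eq_nil_iff_forall_not_mem.2 fun a ha => ?_
        exact absurd (hle a (by simp [ha])) (not_le.2 (hA a ha))
      subst hA0
      simp only [List.nil_append] at hnd hav hle hlen ⊢
      obtain ⟨hvBlt, hClt⟩ := lt_of_nodup_split (v :: B) M C hnd hle
      have hndBC : (B ++ M :: C).Nodup := by
        have : B ++ M :: C <+ v :: B ++ M :: C := List.sublist_cons_self v _
        exact this.nodup (by simpa using hnd)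
      obtain ⟨hndB, hndxC, hdisjBC⟩ := List.nodup_append.1 hndBC
      obtain ⟨hndvB, hndxC2, hdisj⟩ := List.nodup_append.1 (show ((v :: B) ++ M :: C).Nodup from hnd)
      have hCv : ∀ c ∈ C, c < v := by
        intro c hc
        have hsubl : [v, M, c] <+ (v :: B) ++ M :: C := by
          have h0 : [v] ++ [M, c] <+ (v :: B) ++ M :: C :=
            List.Sublist.append (List.singleton_sublist.2 (by simp))
              (List.Sublist.cons₂ M (List.singleton_sublist.2 hc))
          simpa using h0
        have h1 := hav v M c hsubl
        have h2 : c ≠ v := fun h => hdisj v (by simp) c (by simp [hc]) h.symm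
        have h3 := hClt c hc
        rcases lt_trichotomy c v with h | h | h
        · exact h
        · exact absurd h h2
        · exact absurd ⟨h, h3⟩ h1
      have hCB : ∀ b ∈ B, ∀ c ∈ C, c < b := by
        intro b hb c hc
        have hsubl : [b, M, c] <+ (v :: B) ++ M :: C := by
          have : [b] ++ [M, c] <+ B ++ M :: C := by
            refine List.Sublist.append (List.singleton_sublist.2 hb) ?_
            exact List.Sublist.cons₂ M (List.singleton_sublist.2 hc)
          rw [List.cons_append]
          exact this.cons v
        have h1 := hav b M c hsubl
        have h2 : c ≠ b := fun h => hdisjBC b hb c (by simp [hc]) h.symm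
        have h3 := hClt c hc
        rcases lt_trichotomy c b with h | h | h
        · exact h
        · exact absurd h h2
        · exact absurd ⟨h, h3⟩ h1
      have hT : toTree ((v :: B) ++ M :: C) = Tree.node () (toTree (v :: B)) (toTree C) :=
        toTree_split _ _ _ hvBlt hClt
      have hT2 : toTree (v :: B) = Tree.node () (toTree ([] : List ℕ)) (toTree B) := by
        have := toTree_split [] v B (by simp) hB
        simpa using this
      have hBCxlt : ∀ y ∈ (v :: B) ++ C, y < M := by
        intro y hy
        rcases List.mem_append.1 hy with h | h
        · exact hvBlt y h
        · exact hClt y h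
      have hT' : toTree ((M :: v :: B) ++ C) = Tree.node () (toTree ([] : List ℕ))
          (toTree ((v :: B) ++ C)) := by
        have h0 : (M :: v :: B) ++ C = [] ++ M :: ((v :: B) ++ C) := by simp
        rw [h0]
        exact toTree_split [] M _ (by simp) hBCxlt
      have hBClt : ∀ y ∈ B ++ C, y < v := by
        intro y hy
        rcases List.mem_append.1 hy with h | h
        · exact hB y h
        · exact hCv y h
      have hT'2 : toTree ((v :: B) ++ C) = Tree.node () (toTree ([] : List ℕ))
          (toTree (B ++ C)) := by
        have h0 : (v :: B) ++ C = [] ++ v :: (B ++ C) := by simp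
        rw [h0]
        exact toTree_split [] v _ (by simp) hBClt
      have hconc := spineAux_concat B.length B C le_rfl hndB hCB
      have e0 : spineAux (toTree ([] : List ℕ)) = (0, 0) := rfl
      have e1 : spineAux (toTree (v :: B)) = ((spineAux (toTree B)).1 + 1,
          (spineAux (toTree B)).2) := by
        rw [hT2, spineAux_node, e0]
        simp
      have eL : spineAux (toTree ((v :: B) ++ M :: C)) = ((spineAux (toTree C)).1 + 1,
          ((spineAux (toTree B)).1 + 1) ::ₘ ((spineAux (toTree B)).2 + (spineAux (toTree C)).2)) := by
        rw [hT, spineAux_node, e1]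
        simp [Multiset.cons_add]
      have e2 : spineAux (toTree ((v :: B) ++ C)) = ((spineAux (toTree B)).1
          + (spineAux (toTree C)).1 + 1, (spineAux (toTree B)).2 + (spineAux (toTree C)).2) := by
        rw [hT'2, spineAux_node, e0, hconc]
        simp
      have eL' : spineAux (toTree ((M :: v :: B) ++ C)) = ((spineAux (toTree B)).1
          + (spineAux (toTree C)).1 + 2, (spineAux (toTree B)).2 + (spineAux (toTree C)).2) := by
        rw [hT', spineAux_node, e0, e2]
        refine Prod.ext ?_ ?_
        · simp
        · simp
      rw [eL, eL']
      right
      refine ⟨(spineAux (toTree B)).1 + 1,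
        (spineAux (toTree B)).2 + (spineAux (toTree C)).2, rfl, ?_, rfl⟩
      show (spineAux (toTree B)).1 + (spineAux (toTree C)).1 + 2
          = (spineAux (toTree C)).1 + 1 + ((spineAux (toTree B)).1 + 1)
      omega
    · -- M ∈ C
      obtain ⟨s, t, rfl⟩ := List.append_of_mem hMC
      have hshape : A ++ v :: B ++ x :: (s ++ M :: t) = (A ++ v :: B ++ x :: s) ++ M :: t := by
        simp
      have hshape' : A ++ x :: v :: B ++ (s ++ M :: t) = (A ++ x :: v :: B ++ s) ++ M :: t := by
        simp
      obtain ⟨hflt, htlt⟩ := lt_of_nodup_split (A ++ v :: B ++ x :: s) M t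
        (by rw [← hshape]; exact hnd) (fun y hy => hle y (by rw [hshape]; exact hy))
      have hflt' : ∀ y ∈ A ++ x :: v :: B ++ s, y < M := by
        intro y hy
        apply hflt
        simp only [List.mem_append, List.mem_cons] at hy ⊢
        tauto
      have hT : toTree (A ++ v :: B ++ x :: (s ++ M :: t))
          = Tree.node () (toTree (A ++ v :: B ++ x :: s)) (toTree t) := by
        rw [hshape]
        exact toTree_split _ _ _ hflt htlt
      have hT' : toTree (A ++ x :: v :: B ++ (s ++ M :: t))
          = Tree.node () (toTree (A ++ x :: v :: B ++ s)) (toTree t) := by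
        rw [hshape']
        exact toTree_split _ _ _ hflt' htlt
      have hsub : A ++ v :: B ++ x :: s <+ A ++ v :: B ++ x :: (s ++ M :: t) := by
        rw [hshape]
        exact List.sublist_append_left _ _
      have hrec := IH A v x B s
        (by have := hlen; simp only [List.length_append, List.length_cons] at this ⊢; omega)
        (hsub.nodup hnd) (SAvoid.sublist hsub hav) hA hB hvx
      have hne : A ++ v :: B ++ x :: s ≠ [] := by simp
      have hne' : A ++ x :: v :: B ++ s ≠ [] := by simp
      rw [hT, hT', spineAux_node, spineAux_node, if_neg (rs_pos _ hne), if_neg (rs_pos _ hne')]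
      rcases hrec with ⟨h1, a, b, S, h2, h3⟩ | ⟨a, S, h1, h2, h3⟩
      · left
        refine ⟨by rw [h1], a, b,
          ((spineAux (toTree (A ++ v :: B ++ x :: s))).1 ::ₘ S) + (spineAux (toTree t)).2, ?_, ?_⟩
        · rw [h2]
          simp only [← Multiset.singleton_add]
          abel
        · rw [h3, h1]
          simp only [← Multiset.singleton_add]
          abel
      · left
        refine ⟨rfl, (spineAux (toTree (A ++ v :: B ++ x :: s))).1, a,
          S + (spineAux (toTree t)).2, ?_, ?_⟩
        · rw [h1]
          simp only [← Multiset.singleton_add]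
          abel
        · rw [h3, h2]
          simp only [← Multiset.singleton_add]
          abel

lemma list_two_split (l : List ℕ) (i j : ℕ) (hij : i < j) (hj : j < l.length) :
    l = l.take i ++ l[i]'(lt_trans hij hj) ::
      ((l.drop (i+1)).take (j-i-1) ++ l[j]'hj :: l.drop (j+1)) := by
  conv_lhs => rw [← List.take_append_drop i l]
  rw [List.drop_eq_getElem_cons (lt_trans hij hj)]
  congr 1
  congr 1
  conv_lhs => rw [← List.take_append_drop (j-i-1) (l.drop (i+1))]
  rw [List.drop_drop]
  have h1 : i + 1 + (j - i - 1) = j := by omega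
  rw [h1]
  rw [List.drop_eq_getElem_cons hj]

lemma ofFn_decomp_sigma {n : ℕ} (σ : Equiv.Perm (Fin n)) (i j : Fin n) (hij : (i:ℕ) < (j:ℕ)) :
    List.ofFn (fun t => (σ t : ℕ)) =
      (List.ofFn (fun t => (σ t : ℕ))).take i ++ (σ i : ℕ) ::
        ((List.ofFn (fun t => (σ t : ℕ))).drop ((i:ℕ)+1)).take ((j:ℕ)-(i:ℕ)-1) ++ (σ j : ℕ) ::
        (List.ofFn (fun t => (σ t : ℕ))).drop ((j:ℕ)+1) := by
  have hjlen : (j:ℕ) < (List.ofFn (fun t => (σ t : ℕ))).length := by simp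
  have h := list_two_split (List.ofFn (fun t => (σ t : ℕ))) i j hij hjlen
  have e1 : (List.ofFn (fun t => (σ t : ℕ)))[(i:ℕ)]'(lt_trans hij hjlen) = (σ i : ℕ) := by
    simp [List.getElem_ofFn]
  have e2 : (List.ofFn (fun t => (σ t : ℕ)))[(j:ℕ)]'hjlen = (σ j : ℕ) := by
    simp [List.getElem_ofFn]
  rw [e1, e2] at h
  conv_lhs => rw [h]
  simp

lemma fin_mk_eq {n a b : ℕ} (ha : a < n) (hb : b < n) (h : a = b) :
    (⟨a, ha⟩ : Fin n) = ⟨b, hb⟩ := by subst h; rfl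

lemma ofFn_decomp_phi {n : ℕ} (σ φ : Equiv.Perm (Fin n)) (i j : Fin n)
    (hpre : ∀ t : Fin n, t < i → φ t = σ t) (hmid : φ i = σ j)
    (hseg : ∀ t : Fin n, i ≤ t → ∀ h : t < j,
      φ ⟨(t : ℕ) + 1, Nat.lt_of_le_of_lt (Nat.succ_le_of_lt (Fin.lt_def.mp h)) j.isLt⟩ = σ t)
    (hpost : ∀ t : Fin n, j < t → φ t = σ t) (hij : (i:ℕ) < (j:ℕ)) :
    List.ofFn (fun t => (φ t : ℕ)) =
      (List.ofFn (fun t => (σ t : ℕ))).take i ++ (σ j : ℕ) :: (σ i : ℕ) ::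
        ((List.ofFn (fun t => (σ t : ℕ))).drop ((i:ℕ)+1)).take ((j:ℕ)-(i:ℕ)-1) ++
        (List.ofFn (fun t => (σ t : ℕ))).drop ((j:ℕ)+1) := by
  have hjn : (j:ℕ) < n := j.isLt
  have hin : (i:ℕ) < n := lt_trans hij hjn
  apply List.ext_getElem
  · simp only [List.length_ofFn, List.length_append, List.length_cons, List.length_take,
      List.length_drop]
    omega
  intro p hp1 hp2
  have hpn : p < n := by simpa using hp1
  have hL : (List.ofFn (fun t => (φ t : ℕ)))[p]'hp1 = (φ ⟨p, hpn⟩ : ℕ) := by simp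
  rw [hL]
  simp only [List.getElem_append, List.getElem_take, List.getElem_drop, List.getElem_ofFn,
    List.getElem_cons, List.length_take, List.length_drop, List.length_ofFn, List.length_cons,
    List.length_append]
  split_ifs with h1 h2 h3 h4
  · -- p < i : prefix
    have e := congrArg Fin.val (hpre ⟨p, hpn⟩ (Fin.lt_def.mpr (show p < (i:ℕ) by omega)))
    convert e using 2
  · -- p = i : value x = σ j
    have e := congrArg Fin.val hmid
    convert e using 3
    exact Fin.ext (show p = (i:ℕ) by omega)
  · -- p = i+1 : value v = σ i
    have e := congrArg Fin.val (hseg i (le_refl i) (Fin.lt_def.mpr hij))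
    convert e using 3
    exact Fin.ext (show p = (i:ℕ) + 1 by omega)
  · -- B segment
    have e := congrArg Fin.val (hseg ⟨p-1, by omega⟩
      (Fin.le_def.mpr (show (i:ℕ) ≤ p - 1 by omega))
      (Fin.lt_def.mpr (show p - 1 < (j:ℕ) by omega)))
    convert e using 3
    · exact Fin.ext (show p = (p - 1) + 1 by omega)
    · exact fin_mk_eq _ _ (by omega)
  · -- C segment
    have e := congrArg Fin.val (hpost ⟨p, hpn⟩ (Fin.lt_def.mpr (show (j:ℕ) < p by omega)))
    convert e using 3
    exact fin_mk_eq _ _ (by omega)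

open List in
lemma savoid_ofFn {n : ℕ} (σ : Equiv.Perm (Fin n)) (hσ : Avoids132 σ) :
    SAvoid (List.ofFn fun t => (σ t : ℕ)) := by
  rintro a b c hs ⟨hac, hcb⟩
  apply hσ
  obtain ⟨e, he⟩ := List.sublist_iff_exists_fin_orderEmbedding_get_eq.1 hs
  have hlen : (List.ofFn fun t => (σ t : ℕ)).length = n := by simp
  have h3 : [a, b, c].length = 3 := rfl
  have h0 := he ⟨0, by simp⟩
  have h1 := he ⟨1, by simp⟩
  have h2 := he ⟨2, by simp⟩
  rw [List.get_ofFn] at h0 h1 h2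
  refine ⟨Fin.cast hlen (e ⟨0, by simp⟩), Fin.cast hlen (e ⟨1, by simp⟩),
    Fin.cast hlen (e ⟨2, by simp⟩), ?_, ?_, ?_, ?_⟩
  · have := e.strictMono (show (⟨0, by simp⟩ : Fin [a,b,c].length) < ⟨1, by simp⟩ by
      simp [Fin.lt_def])
    simpa [Fin.lt_def] using this
  · have := e.strictMono (show (⟨1, by simp⟩ : Fin [a,b,c].length) < ⟨2, by simp⟩ by
      simp [Fin.lt_def])
    simpa [Fin.lt_def] using this
  · rw [Fin.lt_def]
    have e0 : (σ (Fin.cast hlen (e ⟨0, by simp⟩)) : ℕ) = a := by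
      rw [← h0]; rfl
    have e2 : (σ (Fin.cast hlen (e ⟨2, by simp⟩)) : ℕ) = c := by
      rw [← h2]; rfl
    rw [e0, e2]; exact hac
  · rw [Fin.lt_def]
    have e1 : (σ (Fin.cast hlen (e ⟨1, by simp⟩)) : ℕ) = b := by
      rw [← h1]; rfl
    have e2 : (σ (Fin.cast hlen (e ⟨2, by simp⟩)) : ℕ) = c := by
      rw [← h2]; rfl
    rw [e1, e2]; exact hcb

/-- the spine structure of `T(σ^{σ_j})` is obtained from that of `T(σ)`
by merging exactly two parts. -/
theorem spine_merge {n : ℕ} (σ φ : Equiv.Perm (Fin n)) (i j : Fin n)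
    (hσ : Avoids132 σ) (h : IsShift σ φ i j) :
    ∃ (S : Multiset ℕ) (a b : ℕ),
      spineStructure (treeOf σ) = a ::ₘ b ::ₘ S ∧
      spineStructure (treeOf φ) = (a + b) ::ₘ S := by
  obtain ⟨⟨hij, hvx', hA', hB'⟩, hpre, hmid, hseg, hpost⟩ := h
  have hijv : (i:ℕ) < (j:ℕ) := hij
  have hjn : (j:ℕ) < n := j.isLt
  have hin : (i:ℕ) < n := lt_trans hijv hjn
  have hdec := ofFn_decomp_sigma σ i j hijv
  have hdec' := ofFn_decomp_phi σ φ i j hpre hmid hseg hpost hijv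
  have hinj : Function.Injective (fun t => ((σ t : ℕ))) :=
    fun s t hst => σ.injective (Fin.val_injective hst)
  have hnd : (List.ofFn (fun t => (σ t : ℕ))).Nodup := List.nodup_ofFn.2 hinj
  have hsav : SAvoid (List.ofFn (fun t => (σ t : ℕ))) := savoid_ofFn σ hσ
  have hAcond : ∀ a ∈ (List.ofFn (fun t => (σ t : ℕ))).take (i:ℕ), (σ j : ℕ) < a := by
    intro a ha
    rw [List.mem_iff_getElem] at ha
    obtain ⟨m, hm, hval⟩ := ha
    simp only [List.getElem_take, List.getElem_ofFn, List.length_take, List.length_ofFn] at hval hm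
    rw [← hval]
    exact Fin.lt_def.mp (hA' ⟨m, by omega⟩ (Fin.lt_def.mpr (show m < (i:ℕ) by omega)))
  have hBcond : ∀ b ∈ ((List.ofFn (fun t => (σ t : ℕ))).drop ((i:ℕ)+1)).take ((j:ℕ)-(i:ℕ)-1),
      b < (σ i : ℕ) := by
    intro b hb
    rw [List.mem_iff_getElem] at hb
    obtain ⟨m, hm, hval⟩ := hb
    simp only [List.getElem_take, List.getElem_drop, List.getElem_ofFn, List.length_take,
      List.length_drop, List.length_ofFn] at hval hm
    rw [← hval]
    exact Fin.lt_def.mp (hB' ⟨(i:ℕ) + 1 + m, by omega⟩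
      (Fin.lt_def.mpr (show (i:ℕ) < (i:ℕ) + 1 + m by omega))
      (Fin.lt_def.mpr (show (i:ℕ) + 1 + m < (j:ℕ) by omega)))
  have hvx : (σ i : ℕ) < (σ j : ℕ) := Fin.lt_def.mp hvx'
  obtain ⟨A, hAdef⟩ : ∃ l, (List.ofFn (fun t => (σ t : ℕ))).take (i:ℕ) = l := ⟨_, rfl⟩
  obtain ⟨B, hBdef⟩ : ∃ l,
      ((List.ofFn (fun t => (σ t : ℕ))).drop ((i:ℕ)+1)).take ((j:ℕ)-(i:ℕ)-1) = l := ⟨_, rfl⟩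
  obtain ⟨C, hCdef⟩ : ∃ l, (List.ofFn (fun t => (σ t : ℕ))).drop ((j:ℕ)+1) = l := ⟨_, rfl⟩
  obtain ⟨v, hvdef⟩ : ∃ v, (σ i : ℕ) = v := ⟨_, rfl⟩
  obtain ⟨x, hxdef⟩ : ∃ x, (σ j : ℕ) = x := ⟨_, rfl⟩
  rw [hAdef, hBdef, hCdef, hvdef, hxdef] at hdec hdec'
  rw [hAdef, hxdef] at hAcond
  rw [hBdef, hvdef] at hBcond
  rw [hvdef, hxdef] at hvx
  rw [hdec] at hnd hsav
  have hres := key _ A v x B C le_rfl hnd hsav hAcond hBcond hvx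
  have hTσ : treeOf σ = toTree (A ++ v :: B ++ x :: C) := congrArg toTree hdec
  have hTφ : treeOf φ = toTree (A ++ x :: v :: B ++ C) := congrArg toTree hdec'
  have hr0 : (spineAux (toTree (A ++ v :: B ++ x :: C))).1 ≠ 0 := rs_pos _ (by simp)
  have hr0' : (spineAux (toTree (A ++ x :: v :: B ++ C))).1 ≠ 0 := rs_pos _ (by simp)
  rw [hTσ, hTφ]
  simp only [spineStructure]
  rw [if_neg hr0, if_neg hr0']
  rcases hres with ⟨h1, a, b, S, h2, h3⟩ | ⟨a, S, h1, h2, h3⟩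
  · refine ⟨(spineAux (toTree (A ++ v :: B ++ x :: C))).1 ::ₘ S, a, b, ?_, ?_⟩
    · rw [h2]
      simp only [← Multiset.singleton_add]
      abel
    · rw [h1, h3]
      exact Multiset.cons_swap _ _ _
  · refine ⟨S, (spineAux (toTree (A ++ v :: B ++ x :: C))).1, a, ?_, ?_⟩
    · rw [h1]
    · rw [h2, h3]
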